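/- Let G be a finite simple graph, let C be a proper coloring of G with χ(G) colors, and let C₁ be one of its color classes. Let 𝒢 be the subgroup of Aut(G) consisting of all automorphisms A with A(C₁) = C₁ (setwise), assume 𝒢 is nontrivial, and let r be the least prime dividing |𝒢|. For A ∈ 𝒢 let θ_A denote the number of distinct orbits induced by A on C₁ (i.e., orbits of the cyclic group generated by A acting on C₁). If for some integer t ≥ 2 one has Σ_{A ∈ 𝒢} t^(θ_A − |C₁|) < r, then χ_D(G) ≤ χ(G) + t − 1. -/

import Mathlib

/-- A permutation of the vertices is an automorphism of the simple graph `G` if it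
preserves adjacency (and hence non-adjacency). -/
def IsGraphAutomorphism {V : Type*} (G : SimpleGraph V) (σ : Equiv.Perm V) : Prop :=
  ∀ u v : V, G.Adj (σ u) (σ v) ↔ G.Adj u v

/-- A proper coloring is distinguishing if the only automorphism mapping every color
class to itself is the identity. -/
def IsDistinguishing {V : Type*} (G : SimpleGraph V) {α : Type*} (C : G.Coloring α) : Prop :=
  ∀ σ : Equiv.Perm V, IsGraphAutomorphism G σ → (∀ v, C (σ v) = C v) → σ = 1

/-- The distinguishing chromatic number: the least number of colors of a proper
distinguishing coloring. -/
noncomputable def distChromNum {V : Type*} (G : SimpleGraph V) : ℕ :=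
  sInf {n : ℕ | ∃ C : G.Coloring (Fin n), IsDistinguishing G C}

/-- The chromatic number (as a natural number). -/
noncomputable def chromNum {V : Type*} (G : SimpleGraph V) : ℕ :=
  sInf {n : ℕ | G.Colorable n}

open Finset

lemma aux_pow_mem {V : Type*} (C₁ : Finset V) (σ : Equiv.Perm V)
    (hpres : ∀ v, σ v ∈ C₁ ↔ v ∈ C₁) (m : ℕ) {v : V} (hv : v ∈ C₁) : (σ ^ m) v ∈ C₁ := by
  induction m with
  | zero => simpa using hv
  | succ k ih => rw [pow_succ', Equiv.Perm.mul_apply]; exact (hpres _).2 ih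

lemma aux_fix_pow {V : Type*} (C₁ : Finset V) (σ : Equiv.Perm V)
    (hpres : ∀ v, σ v ∈ C₁ ↔ v ∈ C₁) {t : ℕ} (f : {x // x ∈ C₁} → Fin t)
    (hf : ∀ v (hv : v ∈ C₁) (hv' : σ v ∈ C₁), f ⟨σ v, hv'⟩ = f ⟨v, hv⟩)
    (m : ℕ) {v : V} (hv : v ∈ C₁) (hv' : (σ ^ m) v ∈ C₁) :
    f ⟨(σ ^ m) v, hv'⟩ = f ⟨v, hv⟩ := by
  induction m with
  | zero => simp
  | succ k ih =>
      have hk : (σ ^ k) v ∈ C₁ := aux_pow_mem C₁ σ hpres k hv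
      have h1 : (σ ^ (k+1)) v = σ ((σ ^ k) v) := by
        rw [pow_succ', Equiv.Perm.mul_apply]
      have h2 : σ ((σ ^ k) v) ∈ C₁ := (hpres _).2 hk
      calc f ⟨(σ ^ (k+1)) v, hv'⟩ = f ⟨σ ((σ ^ k) v), h2⟩ := by congr 1; exact Subtype.ext h1
        _ = f ⟨(σ ^ k) v, hk⟩ := hf _ hk h2
        _ = f ⟨v, hv⟩ := ih hk

lemma aux_fix_card_le {V : Type*} [Fintype V] (C₁ : Finset V) (σ : Equiv.Perm V)
    (hpres : ∀ v, σ v ∈ C₁ ↔ v ∈ C₁) (t : ℕ) :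
    Nat.card {f : {x // x ∈ C₁} → Fin t //
        ∀ v (hv : v ∈ C₁) (hv' : σ v ∈ C₁), f ⟨σ v, hv'⟩ = f ⟨v, hv⟩}
      ≤ t ^ (Nat.card ((fun v => {w : V | ∃ m : ℕ, (σ ^ m) v = w}) '' (C₁ : Set V))) := by
  classical
  set Orb : Set (Set V) := (fun v => {w : V | ∃ m : ℕ, (σ ^ m) v = w}) '' (C₁ : Set V) with hOrb
  have : ∀ O : Orb, ∃ v : {x // x ∈ C₁}, {w : V | ∃ m : ℕ, (σ ^ m) v.1 = w} = O.1 := by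
    rintro ⟨O, v, hv, rfl⟩
    exact ⟨⟨v, hv⟩, rfl⟩
  choose rep hrep using this
  set J : {f : {x // x ∈ C₁} → Fin t //
      ∀ v (hv : v ∈ C₁) (hv' : σ v ∈ C₁), f ⟨σ v, hv'⟩ = f ⟨v, hv⟩} → (Orb → Fin t) :=
    fun f O => f.1 (rep O) with hJ
  have hinj : Function.Injective J := by
    intro f g h
    apply Subtype.ext; funext v
    have hmem : {w : V | ∃ m : ℕ, (σ ^ m) v.1 = w} ∈ Orb := ⟨v.1, v.2, rfl⟩
    set O : Orb := ⟨_, hmem⟩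
    have hv_in : v.1 ∈ ({w : V | ∃ m : ℕ, (σ ^ m) (rep O).1 = w} : Set V) := by
      rw [hrep O]; exact ⟨0, by simp⟩
    obtain ⟨m, hm⟩ := hv_in
    have hv' : (σ ^ m) (rep O).1 ∈ C₁ := by rw [hm]; exact v.2
    have e1 : f.1 v = f.1 (rep O) := by
      have := aux_fix_pow C₁ σ hpres f.1 f.2 m (rep O).2 hv'
      rw [show v = ⟨(σ ^ m) (rep O).1, hv'⟩ from Subtype.ext hm.symm]
      exact this
    have e2 : g.1 v = g.1 (rep O) := by
      have := aux_fix_pow C₁ σ hpres g.1 g.2 m (rep O).2 hv'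
      rw [show v = ⟨(σ ^ m) (rep O).1, hv'⟩ from Subtype.ext hm.symm]
      exact this
    rw [e1, e2]
    exact congrFun h O
  calc Nat.card _ ≤ Nat.card (Orb → Fin t) := Nat.card_le_card_of_injective J hinj
    _ = t ^ Nat.card Orb := by
        rw [Nat.card_fun, Nat.card_eq_fintype_card (α := Fin t), Fintype.card_fin]


/-- Variant of the Motion Lemma: if `C` is a proper coloring of `G` with `χ(G)` colors,
`C₁` is one of its color classes, `𝒢` is the (nontrivial) subgroup of `Aut G` of
automorphisms fixing `C₁` setwise, `r` is the least prime dividing `|𝒢|`, and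
`∑_{σ ∈ 𝒢} t^(θ_σ - |C₁|) < r` where `θ_σ` is the number of orbits of `⟨σ⟩` on `C₁`,
then `χ_D(G) ≤ χ(G) + t - 1`. -/
theorem stmt0 {V : Type*} [Fintype V] (G : SimpleGraph V)
    (C : G.Coloring (Fin (chromNum G))) (c : Fin (chromNum G))
    (C₁ : Finset V) (hC₁ : ∀ v : V, v ∈ C₁ ↔ C v = c)
    (𝒢 : Finset (Equiv.Perm V))
    (h𝒢 : ∀ σ : Equiv.Perm V, σ ∈ 𝒢 ↔
      (IsGraphAutomorphism G σ ∧ ∀ v : V, σ v ∈ C₁ ↔ v ∈ C₁))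
    (hnontriv : ∃ σ ∈ 𝒢, σ ≠ 1)
    (r : ℕ) (hrprime : r.Prime) (hrdvd : r ∣ 𝒢.card)
    (hrleast : ∀ p : ℕ, p.Prime → p ∣ 𝒢.card → r ≤ p)
    (t : ℕ) (ht : 2 ≤ t)
    (hsum : ∑ σ ∈ 𝒢, (t : ℝ) ^
        ((Nat.card ((fun v => {w : V | ∃ m : ℕ, (σ ^ m) v = w}) '' (C₁ : Set V)) : ℤ)
          - (C₁.card : ℤ)) < (r : ℝ)) :
    distChromNum G ≤ chromNum G + t - 1 := by
  classical
  haveI : NeZero t := ⟨by omega⟩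
  set θ : Equiv.Perm V → ℕ :=
    fun σ => Nat.card ((fun v => {w : V | ∃ m : ℕ, (σ ^ m) v = w}) '' (C₁ : Set V)) with hθ
  set fixes : Equiv.Perm V → ({x // x ∈ C₁} → Fin t) → Prop :=
    fun σ f => ∀ v (hv : v ∈ C₁) (hv' : σ v ∈ C₁), f ⟨σ v, hv'⟩ = f ⟨v, hv⟩ with hfixes
  have h1G : (1 : Equiv.Perm V) ∈ 𝒢 := (h𝒢 1).2 ⟨fun u v => by simp, fun v => by simp⟩
  -- 𝒢 as a subgroup
  set G' : Subgroup (Equiv.Perm V) :=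
    { carrier := ↑𝒢
      one_mem' := h1G
      mul_mem' := by
        intro a b ha hb
        rw [Finset.mem_coe, h𝒢] at *
        refine ⟨fun u v => ?_, fun v => ?_⟩
        · rw [Equiv.Perm.mul_apply, Equiv.Perm.mul_apply, ha.1, hb.1]
        · rw [Equiv.Perm.mul_apply, ha.2, hb.2]
      inv_mem' := by
        intro a ha
        rw [Finset.mem_coe, h𝒢] at *
        refine ⟨fun u v => ?_, fun v => ?_⟩
        · conv_rhs => rw [← (show a (a⁻¹ u) = u from Equiv.apply_symm_apply a u), ← (show a (a⁻¹ v) = v from Equiv.apply_symm_apply a v)]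
          rw [ha.1]
        · conv_rhs => rw [← (show a (a⁻¹ v) = v from Equiv.apply_symm_apply a v)]
          rw [ha.2] } with hG'
  have hGcard : Nat.card G' = 𝒢.card := by
    rw [show Nat.card G' = Nat.card (↑𝒢 : Set (Equiv.Perm V)) from rfl,
      Nat.card_coe_set_eq, Set.ncard_coe_finset]
  -- subgroup of elements fixing a given coloring f of C₁
  have hfix_one : ∀ f, fixes 1 f := by
    intro f v hv hv'
    exact congrArg f (Subtype.ext rfl)
  have hfilter_card : ∀ f : {x // x ∈ C₁} → Fin t,
      (∃ σ ∈ 𝒢, σ ≠ 1 ∧ fixes σ f) → r ≤ (𝒢.filter (fun σ => fixes σ f)).card := by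
    intro f hbad
    obtain ⟨σ₀, hσ₀G, hσ₀ne, hσ₀fix⟩ := hbad
    set Hf : Subgroup (Equiv.Perm V) :=
      { carrier := {σ | σ ∈ 𝒢 ∧ fixes σ f}
        one_mem' := ⟨h1G, hfix_one f⟩
        mul_mem' := by
          rintro a b ⟨haG, haf⟩ ⟨hbG, hbf⟩
          refine ⟨G'.mul_mem haG hbG, ?_⟩
          intro v hv hv'
          have hbv : b v ∈ C₁ := ((h𝒢 b).1 hbG).2 v |>.2 hv
          have h1 : (a * b) v = a (b v) := rfl
          calc f ⟨(a * b) v, hv'⟩ = f ⟨a (b v), by rw [← h1]; exact hv'⟩ := by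
                exact congrArg f (Subtype.ext h1)
            _ = f ⟨b v, hbv⟩ := haf (b v) hbv _
            _ = f ⟨v, hv⟩ := hbf v hv hbv
        inv_mem' := by
          rintro a ⟨haG, haf⟩
          refine ⟨G'.inv_mem haG, ?_⟩
          intro v hv hv'
          have h1 : a (a⁻¹ v) = v := Equiv.apply_symm_apply a v
          have h2 : a (a⁻¹ v) ∈ C₁ := by rw [h1]; exact hv
          have := haf (a⁻¹ v) hv' h2
          rw [show (⟨a (a⁻¹ v), h2⟩ : {x // x ∈ C₁}) = ⟨v, hv⟩ from Subtype.ext h1] at this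
          exact this.symm } with hHf
    have hle : Hf ≤ G' := fun σ hσ => hσ.1
    have hcardeq : Nat.card Hf = (𝒢.filter (fun σ => fixes σ f)).card := by
      have hset : (Hf : Set (Equiv.Perm V)) = ↑(𝒢.filter (fun σ => fixes σ f)) := by
        ext σ
        simp only [Finset.coe_filter, Set.mem_setOf_eq]
        rfl
      rw [show Nat.card Hf = Nat.card (Hf : Set (Equiv.Perm V)) from rfl, hset,
        Nat.card_coe_set_eq, Set.ncard_coe_finset]
    have hne1 : Nat.card Hf ≠ 1 := by
      intro h
      rw [Subgroup.card_eq_one] at h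
      have : σ₀ ∈ Hf := ⟨hσ₀G, hσ₀fix⟩
      rw [h, Subgroup.mem_bot] at this
      exact hσ₀ne this
    obtain ⟨p, hp, hpdvd⟩ := Nat.exists_prime_and_dvd hne1
    have hdvdG : Nat.card Hf ∣ 𝒢.card := hGcard ▸ Subgroup.card_dvd_of_le hle
    have hrp : r ≤ p := hrleast p hp (hpdvd.trans hdvdG)
    have hpos : 0 < Nat.card Hf := Nat.card_pos
    have hple : p ≤ Nat.card Hf := Nat.le_of_dvd hpos hpdvd
    omega
  -- the counting
  set T := t ^ C₁.card with hTdef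
  have hTcard : (univ : Finset ({x // x ∈ C₁} → Fin t)).card = T := by
    rw [Finset.card_univ]
    rw [show (Fintype.card ({x // x ∈ C₁} → Fin t)) =
      (Fintype.card (Fin t)) ^ (Fintype.card {x // x ∈ C₁}) from Fintype.card_fun]
    rw [Fintype.card_fin, Fintype.card_coe]
  have hswap : ∑ σ ∈ 𝒢, ((univ : Finset ({x // x ∈ C₁} → Fin t)).filter
      (fun f => fixes σ f)).card
      = ∑ f : ({x // x ∈ C₁} → Fin t), (𝒢.filter (fun σ => fixes σ f)).card := by
    simp only [Finset.card_filter]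
    exact Finset.sum_comm
  have hub1 : ∀ σ ∈ 𝒢, ((univ : Finset ({x // x ∈ C₁} → Fin t)).filter
      (fun f => fixes σ f)).card ≤ t ^ θ σ := by
    intro σ hσ
    have hpres := ((h𝒢 σ).1 hσ).2
    have := aux_fix_card_le C₁ σ hpres t
    rw [Nat.card_eq_fintype_card, Fintype.card_subtype] at this
    exact this
  have hub : ∑ σ ∈ 𝒢, ((univ : Finset ({x // x ∈ C₁} → Fin t)).filter
      (fun f => fixes σ f)).card ≤ ∑ σ ∈ 𝒢, t ^ θ σ :=
    Finset.sum_le_sum hub1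
  have hnat : ∑ σ ∈ 𝒢, t ^ θ σ < r * T := by
    have ht0 : (t : ℝ) ≠ 0 := by positivity
    have hTpos : (0 : ℝ) < (t : ℝ) ^ C₁.card := by positivity
    have key : ∀ σ : Equiv.Perm V,
        (t : ℝ) ^ ((θ σ : ℤ) - (C₁.card : ℤ)) * (t : ℝ) ^ C₁.card = ((t ^ θ σ : ℕ) : ℝ) := by
      intro σ
      rw [← zpow_natCast (t : ℝ) C₁.card, ← zpow_add₀ ht0]
      push_cast
      rw [sub_add_cancel]
      rw [zpow_natCast]
    have hmul := mul_lt_mul_of_pos_right hsum hTpos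
    rw [Finset.sum_mul] at hmul
    simp only [hθ] at key
    simp only [key] at hmul
    rw [← Nat.cast_sum] at hmul
    have heq : ((r * T : ℕ) : ℝ) = (r : ℝ) * (t : ℝ) ^ C₁.card := by
      rw [hTdef]; push_cast; ring
    have : ((∑ σ ∈ 𝒢, t ^ θ σ : ℕ) : ℝ) < ((r * T : ℕ) : ℝ) := by
      rw [heq]; exact hmul
    exact_mod_cast this
  -- lower bound
  set badP : ({x // x ∈ C₁} → Fin t) → Prop := fun f => ∃ σ ∈ 𝒢, σ ≠ 1 ∧ fixes σ f with hbadP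
  set B := (univ : Finset ({x // x ∈ C₁} → Fin t)).filter badP with hB
  have hBcomp : B.card + ((univ : Finset ({x // x ∈ C₁} → Fin t)).filter
      (fun f => ¬ badP f)).card = T := by
    rw [← hTcard]
    exact Finset.card_filter_add_card_filter_not _
  have hlb : r * B.card + (T - B.card)
      ≤ ∑ f : ({x // x ∈ C₁} → Fin t), (𝒢.filter (fun σ => fixes σ f)).card := by
    rw [← Finset.sum_filter_add_sum_filter_not univ badP]
    have l1 : r * B.card ≤ ∑ f ∈ B, (𝒢.filter (fun σ => fixes σ f)).card := by
      calc r * B.card = ∑ _f ∈ B, r := by rw [Finset.sum_const, smul_eq_mul, mul_comm]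
        _ ≤ _ := Finset.sum_le_sum (fun f hf => hfilter_card f ((Finset.mem_filter.1 hf).2))
    have l2 : T - B.card ≤ ∑ f ∈ (univ : Finset ({x // x ∈ C₁} → Fin t)).filter
        (fun f => ¬ badP f), (𝒢.filter (fun σ => fixes σ f)).card := by
      have : T - B.card = ∑ f ∈ (univ : Finset ({x // x ∈ C₁} → Fin t)).filter
          (fun f => ¬ badP f), 1 := by
        rw [Finset.sum_const, smul_eq_mul, mul_one]
        omega
      rw [this]
      refine Finset.sum_le_sum (fun f hf => ?_)
      rw [Nat.one_le_iff_ne_zero, ← Nat.pos_iff_ne_zero, Finset.card_pos]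
      exact ⟨1, Finset.mem_filter.2 ⟨h1G, hfix_one f⟩⟩
    exact add_le_add l1 l2
  have hBlt : B.card < T := by
    have hBle : B.card ≤ T := by omega
    by_contra hcon
    have hBT : B.card = T := by omega
    have : r * T + (T - T) < r * T := by
      calc r * T + (T - T) = r * B.card + (T - B.card) := by rw [hBT]
        _ ≤ _ := hlb
        _ = _ := hswap.symm
        _ ≤ _ := hub
        _ < r * T := hnat
    omega
  -- get a good coloring f
  have hgoodex : ∃ f : ({x // x ∈ C₁} → Fin t), ¬ badP f := by
    by_contra hcon
    push_neg at hcon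
    have hBu : B = univ := by
      rw [hB]
      exact Finset.filter_true_of_mem (fun f _ => hcon f)
    rw [hBu, hTcard] at hBlt
    exact lt_irrefl _ hBlt
  obtain ⟨f, hfgood⟩ := hgoodex
  have hgood : ∀ σ ∈ 𝒢, fixes σ f → σ = 1 := by
    intro σ hσ hfix
    by_contra hne
    exact hfgood ⟨σ, hσ, hne, hfix⟩
  -- construct the new coloring
  have hfpos : ∀ (x : {x // x ∈ C₁}), f x ≠ 0 → 1 ≤ (f x : ℕ) := by
    intro x hx
    by_contra h
    push_neg at h
    have h0 : (f x : ℕ) = 0 := by omega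
    exact hx (Fin.ext (by simp [h0]))
  have hN : 0 < chromNum G := c.pos
  set M := chromNum G + t - 1 with hM
  have hNM : chromNum G ≤ M := by omega
  set e : Fin (chromNum G) → Fin M := Fin.castLE hNM with he
  set C' : V → Fin M := fun v =>
    if hv : v ∈ C₁ then
      (if f ⟨v, hv⟩ = 0 then e c
       else ⟨chromNum G - 1 + (f ⟨v, hv⟩ : ℕ), by
         have := (f ⟨v, hv⟩).isLt; omega⟩)
    else e (C v) with hC'
  have hC'1 : ∀ v (hv : v ∈ C₁), f ⟨v, hv⟩ = 0 → C' v = e c := by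
    intro v hv h0; simp [hC', hv, h0]
  have hC'2 : ∀ v (hv : v ∈ C₁), f ⟨v, hv⟩ ≠ 0 →
      (C' v : ℕ) = chromNum G - 1 + (f ⟨v, hv⟩ : ℕ) := by
    intro v hv h0; simp [hC', hv, h0]
  have hC'3 : ∀ v, v ∉ C₁ → C' v = e (C v) := by
    intro v hv; simp [hC', hv]
  have heval : ∀ x : Fin (chromNum G), ((e x : Fin M) : ℕ) = (x : ℕ) := fun x => rfl
  have hvalchar : ∀ v, v ∈ C₁ ↔ (C' v = e c ∨ chromNum G ≤ (C' v : ℕ)) := by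
    intro v
    constructor
    · intro hv
      by_cases h0 : f ⟨v, hv⟩ = 0
      · left; exact hC'1 v hv h0
      · right
        rw [hC'2 v hv h0]
        have h1 := hfpos ⟨v, hv⟩ h0
        omega
    · intro h
      by_contra hv
      rw [hC'3 v hv] at h
      rcases h with h | h
      · exact hv ((hC₁ v).2 (Fin.castLE_injective hNM h))
      · rw [heval] at h
        have := (C v).isLt
        omega
  have hproper : ∀ {u v : V}, G.Adj u v → C' u ≠ C' v := by
    have main : ∀ u v : V, u ∈ C₁ → v ∉ C₁ → C' u ≠ C' v := by
      intro u v hu hv heq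
      have hvne : C v ≠ c := fun h => hv ((hC₁ v).2 h)
      by_cases h0 : f ⟨u, hu⟩ = 0
      · rw [hC'1 u hu h0, hC'3 v hv] at heq
        exact hvne (Fin.castLE_injective hNM heq.symm)
      · have h2 := hC'2 u hu h0
        have hval := congrArg Fin.val heq
        rw [hC'3 v hv] at hval
        have h3 : ((e (C v) : Fin M) : ℕ) = (C v : ℕ) := heval _
        have h1 := hfpos ⟨u, hu⟩ h0
        have := (C v).isLt
        rw [h2] at hval
        omega
    intro u v hadj heq
    have hCuv : C u ≠ C v := C.valid hadj
    by_cases hu : u ∈ C₁ <;> by_cases hv : v ∈ C₁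
    · exact hCuv (((hC₁ u).1 hu).trans ((hC₁ v).1 hv).symm)
    · exact main u v hu hv heq
    · exact main v u hv hu heq.symm
    · rw [hC'3 u hu, hC'3 v hv] at heq
      exact hCuv (Fin.castLE_injective hNM heq)
  set Cnew : G.Coloring (Fin M) := SimpleGraph.Coloring.mk C' hproper with hCnew
  have hdist : IsDistinguishing G Cnew := by
    intro σ hauto hfixC
    have hfixC' : ∀ v, C' (σ v) = C' v := hfixC
    have hpres : ∀ v, σ v ∈ C₁ ↔ v ∈ C₁ := by
      intro v; rw [hvalchar (σ v), hvalchar v, hfixC' v]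
    have hσG : σ ∈ 𝒢 := (h𝒢 σ).2 ⟨hauto, hpres⟩
    apply hgood σ hσG
    intro v hv hv'
    have hc' := hfixC' v
    have hclt : ((e c : Fin M) : ℕ) < chromNum G := c.isLt
    by_cases h0 : f ⟨v, hv⟩ = 0
    · rw [hC'1 v hv h0] at hc'
      by_cases h0' : f ⟨σ v, hv'⟩ = 0
      · rw [h0, h0']
      · exfalso
        have h2 := hC'2 (σ v) hv' h0'
        have hval := congrArg Fin.val hc'
        have h1 := hfpos ⟨σ v, hv'⟩ h0'
        omega
    · by_cases h0' : f ⟨σ v, hv'⟩ = 0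
      · exfalso
        rw [hC'1 (σ v) hv' h0'] at hc'
        have h2 := hC'2 v hv h0
        have hval := congrArg Fin.val hc'
        have h1 := hfpos ⟨v, hv⟩ h0
        omega
      · have h2 := hC'2 v hv h0
        have h2' := hC'2 (σ v) hv' h0'
        have hval := congrArg Fin.val hc'
        apply Fin.ext
        omega
  have hmem : M ∈ {n : ℕ | ∃ C : G.Coloring (Fin n), IsDistinguishing G C} := ⟨Cnew, hdist⟩
  exact Nat.sInf_le hmem
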